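/- Let D be a nonempty convex open set in ℝ^d and let w : [0,∞) → ℝ^d be continuous with w(0) ∈ D̄. If (X, φ) is a solution of the Skorohod equation X = w + φ, then X (and hence φ) is continuous on [0,∞). -/

import Mathlib

open MeasureTheory Set Filter Topology
open scoped RealInnerProductSpace

noncomputable section

abbrev Euc (d : ℕ) := EuclideanSpace ℝ (Fin d)

/-- Measure data representing the Lebesgue–Stieltjes measures `dφ` (componentwise, as a
difference of locally finite nonnegative measures) and `d|φ|` (the total variation measure)
of a function `φ : [0,∞) → ℝ^d` of locally bounded variation. -/
structure BVMeasureData (d : ℕ) (φ : ℝ → Euc d) where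
  pos : Fin d → Measure ℝ
  neg : Fin d → Measure ℝ
  var : Measure ℝ
  pos_fin : ∀ i : Fin d, ∀ t : ℝ, pos i (Icc 0 t) < ⊤
  neg_fin : ∀ i : Fin d, ∀ t : ℝ, neg i (Icc 0 t) < ⊤
  increments : ∀ i : Fin d, ∀ s t : ℝ, 0 ≤ s → s ≤ t →
    (pos i (Ioc s t)).toReal - (neg i (Ioc s t)).toReal = φ t i - φ s i
  var_eq : ∀ s t : ℝ, 0 ≤ s → s ≤ t → var (Ioc s t) = eVariationOn φ (Icc s t)

/-- The Stieltjes integral `∫_{(s,t]} ⟨f(τ), dφ(τ)⟩`. -/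
def BVMeasureData.pairing {d : ℕ} {φ : ℝ → Euc d} (M : BVMeasureData d φ)
    (f : ℝ → Euc d) (s t : ℝ) : ℝ :=
  ∑ i : Fin d, ((∫ τ in Ioc s t, f τ i ∂(M.pos i)) - ∫ τ in Ioc s t, f τ i ∂(M.neg i))

/-- `f` is right-continuous at every `t ≥ 0`. -/
def RightContinuousOnNonneg {E : Type*} [TopologicalSpace E] (f : ℝ → E) : Prop :=
  ∀ t : ℝ, 0 ≤ t → ContinuousWithinAt f (Ici t) t

/-- `f` has left limits at every `t > 0`. -/
def HasLeftLimitsOnPos {E : Type*} [TopologicalSpace E] (f : ℝ → E) : Prop :=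
  ∀ t : ℝ, 0 < t → ∃ L, Tendsto f (𝓝[<] t) (𝓝 L)

/-- `φ` is associated with `X` (relative to the convex domain `D`):
`φ` is rcll of locally bounded variation with `φ(0) = 0`, the measure `d|φ|` does not
charge `{t ≥ 0 : X(t) ∈ D}`, and `∫_{(s,t]} ⟨η(τ) − X(τ), dφ(τ)⟩ ≥ 0` for every
continuous `η : [0,∞) → closure D`. -/
structure IsAssociated {d : ℕ} (D : Set (Euc d)) (X : ℝ → Euc d) (φ : ℝ → Euc d)
    (M : BVMeasureData d φ) : Prop where
  rightCont : RightContinuousOnNonneg φ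
  leftLim : HasLeftLimitsOnPos φ
  bv : ∀ t : ℝ, 0 ≤ t → eVariationOn φ (Icc 0 t) < ⊤
  init : φ 0 = 0
  carried : M.var {t : ℝ | 0 ≤ t ∧ X t ∈ D} = 0
  normal : ∀ η : ℝ → Euc d, Continuous η → (∀ t : ℝ, 0 ≤ t → η t ∈ closure D) →
    ∀ s t : ℝ, 0 ≤ s → s ≤ t → 0 ≤ M.pairing (fun τ => η τ - X τ) s t

/-- `(X, φ)` (with measure data `M` for `φ`) solves the Skorohod equation `X = w + φ`
for the domain `D`. -/
structure IsSkorohodSolution {d : ℕ} (D : Set (Euc d)) (w X φ : ℝ → Euc d)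
    (M : BVMeasureData d φ) : Prop where
  rightCont : RightContinuousOnNonneg X
  leftLim : HasLeftLimitsOnPos X
  mem : ∀ t : ℝ, 0 ≤ t → X t ∈ closure D
  eqn : ∀ t : ℝ, 0 ≤ t → X t = w t + φ t
  assoc : IsAssociated D X φ M


section SkorohodHelpers


lemma measurable_comp_countable_range {E : Type*} [MeasurableSpace E]
    (h : ℝ → ℝ) (hmeas : Measurable h) (hcount : (Set.range h).Countable)
    (g : ℝ → E) : Measurable (fun x => g (h x)) := by
  intro s _
  have heq : (fun x => g (h x)) ⁻¹' s = ⋃ v ∈ (Set.range h ∩ g ⁻¹' s), h ⁻¹' {v} := by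
    ext x
    simp only [Set.mem_preimage, Set.mem_iUnion, Set.mem_inter_iff, Set.mem_range,
      Set.mem_singleton_iff, exists_prop]
    constructor
    · intro hx; exact ⟨h x, ⟨⟨x, rfl⟩, hx⟩, rfl⟩
    · rintro ⟨v, ⟨_, hv⟩, hxv⟩; rwa [hxv]
  rw [heq]
  exact MeasurableSet.biUnion (hcount.mono Set.inter_subset_left)
    (fun v _ => hmeas (measurableSet_singleton v))

lemma measurable_of_rightCont {d : ℕ} (g : ℝ → Euc d)
    (hg : ∀ τ : ℝ, ContinuousWithinAt g (Ici τ) τ) : Measurable g := by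
  have hpos : ∀ n : ℕ, (0:ℝ) < (n:ℝ) + 1 := fun n => by positivity
  have key : ∀ n : ℕ, Measurable (fun τ : ℝ => g ((⌈τ * ((n:ℝ)+1)⌉ : ℝ) / ((n:ℝ)+1))) := by
    intro n
    apply measurable_comp_countable_range
    · have hm : Monotone (fun τ : ℝ => (⌈τ * ((n:ℝ)+1)⌉ : ℝ) / ((n:ℝ)+1)) := by
        intro a b hab
        have h1 : (⌈a * ((n:ℝ)+1)⌉ : ℤ) ≤ ⌈b * ((n:ℝ)+1)⌉ :=
          Int.ceil_le_ceil (mul_le_mul_of_nonneg_right hab (hpos n).le)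
        exact (div_le_div_iff_of_pos_right (by positivity)).2 (by exact_mod_cast h1)
      exact hm.measurable
    · apply Set.Countable.mono _ (Set.countable_range (fun k : ℤ => (k : ℝ)/((n:ℝ)+1)))
      rintro x ⟨τ, rfl⟩; exact ⟨⌈τ * ((n:ℝ)+1)⌉, rfl⟩
  apply measurable_of_tendsto_metrizable key
  rw [tendsto_pi_nhds]
  intro τ
  have h1 : ∀ n : ℕ, τ ≤ (⌈τ * ((n:ℝ)+1)⌉ : ℝ) / ((n:ℝ)+1) := by
    intro n
    rw [le_div_iff₀ (hpos n)]
    exact Int.le_ceil _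
  have h2 : ∀ n : ℕ, (⌈τ * ((n:ℝ)+1)⌉ : ℝ) / ((n:ℝ)+1) ≤ τ + 1/((n:ℝ)+1) := by
    intro n
    rw [div_le_iff₀ (hpos n)]
    have := (Int.ceil_lt_add_one (τ * ((n:ℝ)+1))).le
    calc (⌈τ * ((n:ℝ)+1)⌉ : ℝ) ≤ τ * ((n:ℝ)+1) + 1 := this
      _ = (τ + 1/((n:ℝ)+1)) * ((n:ℝ)+1) := by field_simp
  have hten : Tendsto (fun n : ℕ => (⌈τ * ((n:ℝ)+1)⌉ : ℝ) / ((n:ℝ)+1)) atTop (𝓝 τ) := by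
    have hub : Tendsto (fun n : ℕ => τ + 1/((n:ℝ)+1)) atTop (𝓝 τ) := by
      have := tendsto_one_div_add_atTop_nhds_zero_nat (𝕜 := ℝ)
      simpa using (tendsto_const_nhds (x := τ)).add this
    exact tendsto_of_tendsto_of_tendsto_of_le_of_le tendsto_const_nhds hub h1 h2
  have : Tendsto (fun n : ℕ => (⌈τ * ((n:ℝ)+1)⌉ : ℝ) / ((n:ℝ)+1)) atTop (𝓝[Ici τ] τ) :=
    tendsto_nhdsWithin_iff.2 ⟨hten, Eventually.of_forall h1⟩
  exact (hg τ).tendsto.comp this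

lemma abs_comp_le_norm {d : ℕ} (x : Euc d) (i : Fin d) : |x i| ≤ ‖x‖ := by
  rw [EuclideanSpace.norm_eq, ← Real.sqrt_sq_eq_abs (x i)]
  apply Real.sqrt_le_sqrt
  have : x i ^ 2 = ‖x i‖ ^ 2 := by rw [Real.norm_eq_abs, sq_abs]
  rw [this]
  exact Finset.single_le_sum (f := fun j => ‖x j‖ ^ 2) (fun j _ => sq_nonneg _) (Finset.mem_univ i)



lemma tendsto_toReal_measure_Ioc (μ : Measure ℝ) {t : ℝ} (hfin : μ (Icc 0 t) ≠ ⊤)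
    (u : ℕ → ℝ) (hu0 : ∀ n, 0 ≤ u n) (hut : ∀ n, u n < t) (hmono : Monotone u)
    (hten : Tendsto u atTop (𝓝 t)) :
    Tendsto (fun n => (μ (Ioc (u n) t)).toReal) atTop (𝓝 ((μ {t}).toReal)) := by
  have hsub : ∀ n, Ioc (u n) t ⊆ Icc 0 t := fun n =>
    Ioc_subset_Icc_self.trans (Icc_subset_Icc_left (hu0 n))
  have h0t : (0:ℝ) ≤ t := (hu0 0).trans (hut 0).le
  have hsing : μ {t} ≠ ⊤ :=
    ne_top_of_le_ne_top hfin (measure_mono (singleton_subset_iff.2 ⟨h0t, le_rfl⟩))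
  have hiInter : ⋂ n, Ioc (u n) t = {t} := by
    ext x
    simp only [mem_iInter, mem_Ioc, mem_singleton_iff]
    constructor
    · intro hx
      exact le_antisymm (hx 0).2 (le_of_tendsto' hten (fun n => (hx n).1.le))
    · rintro rfl
      exact fun n => ⟨hut n, le_rfl⟩
  have hA : Tendsto (fun n => μ (Ioc (u n) t)) atTop (𝓝 (μ {t})) := by
    have := tendsto_measure_iInter_atTop (μ := μ) (s := fun n => Ioc (u n) t)
      (fun n => measurableSet_Ioc.nullMeasurableSet)
      (fun n m hnm => Ioc_subset_Ioc_left (hmono hnm))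
      ⟨0, ne_top_of_le_ne_top hfin (measure_mono (hsub 0))⟩
    rwa [hiInter] at this
  exact (ENNReal.tendsto_toReal hsing).comp hA

lemma tendsto_setIntegral_Ioc_left {t : ℝ} (μ : Measure ℝ)
    (hfin : μ (Icc 0 t) ≠ ⊤) (f : ℝ → ℝ) (hf : Measurable f)
    (hlim : Tendsto f (𝓝[<] t) (𝓝 0)) (u : ℕ → ℝ) (hu0 : ∀ n, 0 ≤ u n)
    (hut : ∀ n, u n < t) (hmono : Monotone u) (hten : Tendsto u atTop (𝓝 t))
    (C : ℝ) (hbd : ∀ τ ∈ Ioc (u 0) t, |f τ| ≤ C) :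
    Tendsto (fun n => ∫ τ in Ioc (u n) t, f τ ∂μ) atTop (𝓝 (f t * (μ {t}).toReal)) := by
  have h0t : (0:ℝ) ≤ t := (hu0 0).trans (hut 0).le
  have hsub0 : ∀ n, Ioc (u n) t ⊆ Ioc (u 0) t := fun n =>
    Ioc_subset_Ioc_left (hmono (Nat.zero_le n))
  have hsubI : ∀ n, Ioc (u n) t ⊆ Icc 0 t := fun n =>
    Ioc_subset_Icc_self.trans (Icc_subset_Icc_left (hu0 n))
  have hfinn : ∀ n, μ (Ioc (u n) t) ≠ ⊤ := fun n =>
    ne_top_of_le_ne_top hfin (measure_mono (hsubI n))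
  have hint : ∀ n, IntegrableOn f (Ioc (u n) t) μ := by
    intro n
    have h0 : IntegrableOn f (Ioc (u 0) t) μ := by
      refine Integrable.mono' (g := fun _ => C)
        (integrableOn_const (hfinn 0)) hf.aestronglyMeasurable ?_
      rw [ae_restrict_iff' measurableSet_Ioc]
      exact Eventually.of_forall fun τ hτ => by simpa [Real.norm_eq_abs] using hbd τ hτ
    exact h0.mono_set (hsub0 n)
  have hsingval : ∀ n, ∫ τ in Ioc (u n) t, f τ ∂μ
      = (∫ τ in Ioo (u n) t, f τ ∂μ) + f t * (μ {t}).toReal := by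
    intro n
    have hun : Ioc (u n) t = Ioo (u n) t ∪ {t} := (Ioo_union_right (hut n)).symm
    have hdisj : Disjoint (Ioo (u n) t) {t} := by
      simp [disjoint_singleton_right]
    rw [hun, setIntegral_union hdisj (measurableSet_singleton t)
      ((hint n).mono_set (by rw [hun]; exact subset_union_left))
      ((hint n).mono_set (by rw [hun]; exact subset_union_right))]
    congr 1
    rw [Measure.restrict_singleton, integral_smul_measure, integral_dirac, smul_eq_mul, mul_comm]
  have hIoo : Tendsto (fun n => ∫ τ in Ioo (u n) t, f τ ∂μ) atTop (𝓝 0) := by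
    rw [Metric.tendsto_atTop]
    intro ε hε
    set K : ℝ := (μ (Icc 0 t)).toReal + 1 with hK
    have hKpos : 0 < K := by positivity
    have hev : ∀ᶠ τ in 𝓝[<] t, dist (f τ) 0 < ε / K :=
      Metric.tendsto_nhds.mp hlim (ε / K) (by positivity)
    obtain ⟨a, (ha : a < t), hasub⟩ := mem_nhdsLT_iff_exists_Ioo_subset.1 hev
    obtain ⟨N, hN⟩ := (hten.eventually (eventually_gt_nhds ha)).exists_forall_of_atTop
    refine ⟨N, fun n hn => ?_⟩
    have hbound : ∀ τ ∈ Ioo (u n) t, ‖f τ‖ ≤ ε / K := by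
      intro τ hτ
      have : τ ∈ Ioo a t := ⟨(hN n hn).trans hτ.1, hτ.2⟩
      have := hasub this
      simp only [mem_setOf_eq, dist_zero_right] at this
      exact this.le
    have hm : μ (Ioo (u n) t) < ⊤ :=
      (ne_top_of_le_ne_top (hfinn n) (measure_mono Ioo_subset_Ioc_self)).lt_top
    have h1 : ‖∫ τ in Ioo (u n) t, f τ ∂μ‖ ≤ (ε / K) * (μ (Ioo (u n) t)).toReal :=
      norm_setIntegral_le_of_norm_le_const hm hbound
    rw [dist_zero_right]
    calc ‖∫ τ in Ioo (u n) t, f τ ∂μ‖ ≤ (ε / K) * (μ (Ioo (u n) t)).toReal := h1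
      _ ≤ (ε / K) * (μ (Icc 0 t)).toReal := by
          exact mul_le_mul_of_nonneg_left (ENNReal.toReal_mono hfin
            (measure_mono ((Ioo_subset_Ioc_self).trans (hsubI n)))) (by positivity)
      _ = (ε / K) * (K - 1) := by rw [hK]; ring_nf
      _ < (ε / K) * K := by
          have : (0:ℝ) < ε / K := by positivity
          nlinarith
      _ = ε := by field_simp
  have := hIoo.add_const (f t * (μ {t}).toReal)
  rw [zero_add] at this
  exact Tendsto.congr (fun n => (hsingval n).symm) this

end SkorohodHelpers

/-- **Lemma 4.1.4.** If `w : [0,∞) → ℝ^d` is continuous with `w(0) ∈ closure D` and `(X, φ)`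
solves the Skorohod equation `X = w + φ` for a nonempty convex open `D ⊆ ℝ^d`, then `X`
(and hence `φ`) is continuous on `[0,∞)`. -/
theorem skorohod_solution_continuous {d : ℕ} (D : Set (Euc d)) (hne : D.Nonempty)
    (hconv : Convex ℝ D) (hopen : IsOpen D)
    (w : ℝ → Euc d) (hw : ContinuousOn w (Ici 0)) (hw0 : w 0 ∈ closure D)
    (X φ : ℝ → Euc d) (M : BVMeasureData d φ)
    (hsol : IsSkorohodSolution D w X φ M) :
    ContinuousOn X (Ici 0) ∧ ContinuousOn φ (Ici 0) := by
  classical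
  have hproj : ∀ i : Fin d, Continuous (fun x : Euc d => x i) := by
    intro i
    exact (EuclideanSpace.proj (𝕜 := ℝ) i).continuous
  have hXleft : ∀ t : ℝ, 0 < t → Tendsto X (𝓝[<] t) (𝓝 (X t)) := by
    intro t ht
    obtain ⟨L, hL⟩ := hsol.leftLim t ht
    obtain ⟨Lφ, hLφ⟩ := hsol.assoc.leftLim t ht
    suffices hXtL : X t = L by rwa [← hXtL] at hL
    have hIoo : Ioo (0:ℝ) t ∈ 𝓝[<] t := Ioo_mem_nhdsLT_of_mem ⟨ht, le_refl t⟩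
    have hle : 𝓝[<] t ≤ 𝓝[Ici 0] t :=
      le_trans (nhdsWithin_le_of_mem hIoo) (nhdsWithin_mono t (fun x hx => hx.1.le))
    have hwl : Tendsto w (𝓝[<] t) (𝓝 (w t)) := (hw t ht.le).mono_left hle
    have hLeq : L = w t + Lφ := by
      refine tendsto_nhds_unique hL ?_
      refine Tendsto.congr' ?_ (hwl.add hLφ)
      filter_upwards [hIoo] with τ hτ
      exact (hsol.eqn τ hτ.1.le).symm
    have hkey : φ t - Lφ = X t - L := by
      rw [hsol.eqn t ht.le, hLeq]; abel
    set Y : ℝ → Euc d := fun τ => X (max τ 0) with hYdef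
    have hYmeas : Measurable Y := by
      apply measurable_of_rightCont
      intro τ
      rcases le_or_gt 0 τ with hτ | hτ
      · have hXc : ContinuousWithinAt X (Ici τ) (max τ 0) := by
          rw [max_eq_left hτ]; exact hsol.rightCont τ hτ
        have hfc : ContinuousWithinAt (fun σ : ℝ => max σ 0) (Ici τ) τ :=
          (continuous_id.max continuous_const).continuousWithinAt
        have hmaps : MapsTo (fun σ : ℝ => max σ 0) (Ici τ) (Ici τ) :=
          fun σ hσ => mem_Ici.2 (le_trans hσ (le_max_left _ _))
        exact ContinuousWithinAt.comp (g := X) (f := fun σ : ℝ => max σ 0)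
          (s := Ici τ) (t := Ici τ) (x := τ) hXc hfc hmaps
      · have hevc : ∀ᶠ σ in 𝓝[Ici τ] τ, Y σ = X 0 := by
          have hmem : Iio (0:ℝ) ∈ 𝓝[Ici τ] τ :=
            mem_nhdsWithin_of_mem_nhds (Iio_mem_nhds hτ)
          filter_upwards [hmem] with σ hσ
          have hσ0 : σ ≤ 0 := (mem_Iio.1 hσ).le
          simp [hYdef, max_eq_right hσ0]
        have hY0 : Y τ = X 0 := by simp [hYdef, max_eq_right hτ.le]
        exact ContinuousWithinAt.congr_of_eventuallyEq continuousWithinAt_const hevc hY0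
    obtain ⟨a, (ha : a < t), hball⟩ :
        ∃ a ∈ Iio t, ∀ τ ∈ Ioo a t, dist (X τ) L < 1 := by
      have hev : ∀ᶠ τ in 𝓝[<] t, dist (X τ) L < 1 := Metric.tendsto_nhds.mp hL 1 one_pos
      obtain ⟨a, ha, hsub⟩ := mem_nhdsLT_iff_exists_Ioo_subset.1 hev
      exact ⟨a, ha, fun τ hτ => hsub hτ⟩
    set s₁ : ℝ := max a (t/2) with hs₁def
    have hs₁t : s₁ < t := max_lt ha (by linarith)
    have hs₁0 : (0:ℝ) ≤ s₁ := le_trans (by linarith : (0:ℝ) ≤ t/2) (le_max_right _ _)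
    have has₁ : a ≤ s₁ := le_max_left _ _
    set u : ℕ → ℝ := fun n => t - (t - s₁)/((n:ℝ)+1) with hudef
    have hnpos : ∀ n : ℕ, (0:ℝ) < (n:ℝ)+1 := fun n => by positivity
    have hts₁ : 0 < t - s₁ := by linarith
    have hus₁ : ∀ n, s₁ ≤ u n := by
      intro n
      have h1 : (t - s₁)/((n:ℝ)+1) ≤ t - s₁ := by
        rw [div_le_iff₀ (hnpos n)]
        nlinarith [Nat.cast_nonneg (α := ℝ) n]
      simp only [hudef]; linarith
    have hu0 : ∀ n, 0 ≤ u n := fun n => hs₁0.trans (hus₁ n)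
    have hut : ∀ n, u n < t := by
      intro n
      have h2 : 0 < (t - s₁)/((n:ℝ)+1) := div_pos hts₁ (hnpos n)
      simp only [hudef]; linarith
    have humono : Monotone u := by
      intro m n hmn
      have h2 : (t - s₁)/((n:ℝ)+1) ≤ (t - s₁)/((m:ℝ)+1) := by
        gcongr
      simp only [hudef]; linarith
    have huten : Tendsto u atTop (𝓝 t) := by
      have h1 : Tendsto (fun n : ℕ => (t - s₁) * (1/((n:ℝ)+1))) atTop (𝓝 ((t - s₁) * 0)) :=
        tendsto_const_nhds.mul tendsto_one_div_add_atTop_nhds_zero_nat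
      have h2 := (tendsto_const_nhds (x := t) (f := atTop (α := ℕ))).sub h1
      simpa [hudef, mul_one_div, div_eq_mul_inv] using h2
    have huIio : Tendsto u atTop (𝓝[<] t) :=
      tendsto_nhdsWithin_iff.2 ⟨huten, Eventually.of_forall (fun n => hut n)⟩
    have hLclos : L ∈ closure D := by
      refine isClosed_closure.mem_of_tendsto hL ?_
      filter_upwards [hIoo] with τ hτ
      exact hsol.mem τ hτ.1.le
    set C : ℝ := 1 + ‖X t - L‖ with hCdef
    have hC1 : (1:ℝ) ≤ C := by
      have := norm_nonneg (X t - L); simp only [hCdef]; linarith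
    set f : Fin d → ℝ → ℝ := fun i τ => L i - Y τ i with hfdef
    have hfmeas : ∀ i, Measurable (f i) := fun i =>
      measurable_const.sub ((hproj i).measurable.comp hYmeas)
    have hflim : ∀ i, Tendsto (f i) (𝓝[<] t) (𝓝 0) := by
      intro i
      have hXLi : Tendsto (fun τ => X τ i) (𝓝[<] t) (𝓝 (L i)) :=
        ((hproj i).tendsto L).comp hL
      have hYLi : Tendsto (fun τ => Y τ i) (𝓝[<] t) (𝓝 (L i)) := by
        refine Tendsto.congr' ?_ hXLi
        filter_upwards [hIoo] with τ hτ
        simp [hYdef, max_eq_left hτ.1.le]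
      have := (tendsto_const_nhds (x := L i) (f := 𝓝[<] t)).sub hYLi
      simpa using this
    have hft : ∀ i, f i t = L i - X t i := by
      intro i; simp [hfdef, hYdef, max_eq_left ht.le]
    have hfbd : ∀ i, ∀ τ ∈ Ioc (u 0) t, |f i τ| ≤ C := by
      intro i τ hτ
      have hτ0 : (0:ℝ) < τ := lt_of_le_of_lt (hu0 0) hτ.1
      have habs : |f i τ| ≤ ‖L - X τ‖ := by
        have heq : f i τ = (L - X τ) i := by
          simp [hfdef, hYdef, max_eq_left hτ0.le]
        rw [heq]
        exact abs_comp_le_norm _ i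
      rcases eq_or_lt_of_le hτ.2 with heq | hlt
      · rw [heq] at habs ⊢
        calc |f i t| ≤ ‖L - X t‖ := habs
          _ = ‖X t - L‖ := norm_sub_rev _ _
          _ ≤ C := by simp only [hCdef]; linarith
      · have hmem : τ ∈ Ioo a t := ⟨lt_of_le_of_lt (has₁.trans (hus₁ 0)) hτ.1, hlt⟩
        have hb := hball τ hmem
        rw [dist_eq_norm] at hb
        calc |f i τ| ≤ ‖L - X τ‖ := habs
          _ = ‖X τ - L‖ := norm_sub_rev _ _
          _ ≤ 1 := hb.le
          _ ≤ C := hC1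
    have hfinp : ∀ i, M.pos i (Icc 0 t) ≠ ⊤ := fun i => (M.pos_fin i t).ne
    have hfinn : ∀ i, M.neg i (Icc 0 t) ≠ ⊤ := fun i => (M.neg_fin i t).ne
    have Tp : ∀ i, Tendsto (fun n => ∫ τ in Ioc (u n) t, f i τ ∂(M.pos i)) atTop
        (𝓝 (f i t * (M.pos i {t}).toReal)) := fun i =>
      tendsto_setIntegral_Ioc_left (M.pos i) (hfinp i) (f i) (hfmeas i) (hflim i)
        u hu0 hut humono huten C (hfbd i)
    have Tn : ∀ i, Tendsto (fun n => ∫ τ in Ioc (u n) t, f i τ ∂(M.neg i)) atTop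
        (𝓝 (f i t * (M.neg i {t}).toReal)) := fun i =>
      tendsto_setIntegral_Ioc_left (M.neg i) (hfinn i) (f i) (hfmeas i) (hflim i)
        u hu0 hut humono huten C (hfbd i)
    have hpair_eq : ∀ n, M.pairing (fun τ => L - X τ) (u n) t
        = ∑ i, ((∫ τ in Ioc (u n) t, f i τ ∂(M.pos i))
            - ∫ τ in Ioc (u n) t, f i τ ∂(M.neg i)) := by
      intro n
      simp only [BVMeasureData.pairing]
      refine Finset.sum_congr rfl fun i _ => ?_
      have hEq : EqOn (fun τ => (L - X τ) i) (f i) (Ioc (u n) t) := by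
        intro τ hτ
        have hτ0 : (0:ℝ) < τ := lt_of_le_of_lt (hu0 n) hτ.1
        simp [hfdef, hYdef, max_eq_left hτ0.le]
      rw [setIntegral_congr_fun measurableSet_Ioc hEq,
        setIntegral_congr_fun measurableSet_Ioc hEq]
    have hpos_n : ∀ n, 0 ≤ M.pairing (fun τ => L - X τ) (u n) t := fun n =>
      hsol.assoc.normal (fun _ => L) continuous_const (fun _ _ => hLclos)
        (u n) t (hu0 n) (hut n).le
    have hSlim : Tendsto (fun n => ∑ i, ((∫ τ in Ioc (u n) t, f i τ ∂(M.pos i))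
        - ∫ τ in Ioc (u n) t, f i τ ∂(M.neg i))) atTop
        (𝓝 (∑ i, (f i t * (M.pos i {t}).toReal - f i t * (M.neg i {t}).toReal))) :=
      tendsto_finset_sum _ (fun i _ => (Tp i).sub (Tn i))
    have h0S : 0 ≤ ∑ i, (f i t * (M.pos i {t}).toReal - f i t * (M.neg i {t}).toReal) :=
      ge_of_tendsto' (hSlim.congr (fun n => (hpair_eq n).symm)) hpos_n
    have hJ : ∀ i, (M.pos i {t}).toReal - (M.neg i {t}).toReal = X t i - L i := by
      intro i
      have hA := tendsto_toReal_measure_Ioc (M.pos i) (hfinp i) u hu0 hut humono huten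
      have hB := tendsto_toReal_measure_Ioc (M.neg i) (hfinn i) u hu0 hut humono huten
      have hAB := hA.sub hB
      have hinc : ∀ n, (M.pos i (Ioc (u n) t)).toReal - (M.neg i (Ioc (u n) t)).toReal
          = φ t i - φ (u n) i := fun n => M.increments i (u n) t (hu0 n) (hut n).le
      have hφu : Tendsto (fun n => φ (u n) i) atTop (𝓝 (Lφ i)) :=
        (((hproj i).tendsto Lφ).comp hLφ).comp huIio
      have h2 : Tendsto (fun n => φ t i - φ (u n) i) atTop (𝓝 (φ t i - Lφ i)) :=
        tendsto_const_nhds.sub hφu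
      have h3 := tendsto_nhds_unique (hAB.congr hinc) h2
      rw [h3]
      have h4 := congrArg (fun v : Euc d => v i) hkey
      simpa using h4
    have hsum : ∑ i, (f i t * (M.pos i {t}).toReal - f i t * (M.neg i {t}).toReal)
        = ∑ i, -((X t i - L i)^2) := by
      refine Finset.sum_congr rfl fun i _ => ?_
      rw [← mul_sub, hJ i, hft i]; ring
    rw [hsum] at h0S
    have hsq : ∑ i, (X t i - L i)^2 ≤ 0 := by
      rw [Finset.sum_neg_distrib] at h0S; linarith
    have hzero := (Finset.sum_eq_zero_iff_of_nonneg
      (fun i (_ : i ∈ Finset.univ) => sq_nonneg (X t i - L i))).1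
      (le_antisymm hsq (Finset.sum_nonneg fun i _ => sq_nonneg _))
    have hnorm : ‖X t - L‖ = 0 := by
      rw [EuclideanSpace.norm_eq]
      have hz : ∀ i ∈ Finset.univ, ‖(X t - L) i‖ ^ 2 = (0:ℝ) := by
        intro i hi
        have h5 := hzero i hi
        have h6 : (X t - L) i = X t i - L i := rfl
        rw [h6, Real.norm_eq_abs, sq_abs, h5]
      rw [Finset.sum_congr rfl hz]
      simp
    exact sub_eq_zero.1 (norm_eq_zero.1 hnorm)
  have hXcont : ContinuousOn X (Ici 0) := by
    intro t ht
    rcases eq_or_lt_of_le (mem_Ici.1 ht : (0:ℝ) ≤ t) with h0 | h0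
    · rw [← h0]
      exact hsol.rightCont 0 le_rfl
    · refine ContinuousAt.continuousWithinAt ?_
      rw [ContinuousAt, ← nhdsLT_sup_nhdsGE t, tendsto_sup]
      exact ⟨hXleft t h0, hsol.rightCont t ht⟩
  refine ⟨hXcont, ?_⟩
  refine (hXcont.sub hw).congr ?_
  intro τ hτ
  show φ τ = X τ - w τ
  rw [hsol.eqn τ hτ]
  abel


end
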